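/- arXiv:2101.09457 — 2 statements merged into one kernel-verified Lean document; each statement's English description precedes it below -/
import Mathlib

section
/- Let n ≥ 3 be an integer and let ψ : (−1,1) → ℝ be continuously differentiable with ∫_{−1}^{1} (1−ξ²)^{(n−3)/2} |ψ(ξ)|² dξ = 1 and with ψ, ψ' such that all integrals below are finite. Then ∫_{−1}^{1} [ (1−ξ²)^{(n−1)/2} |ψ'(ξ)|² + γ (1−ξ²)^{(n−3)/2} ξ |ψ(ξ)|² ] dξ ≥ −γ²/(n−1)² for every γ ≥ 0. -/
open Real intervalIntegral
section
open MeasureTheory Set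

lemma aux_right (g : ℝ → ℝ) (b₀ : ℝ) (hb₀ : b₀ ∈ Set.Ico (0:ℝ) 1)
    (hg : IntervalIntegrable g MeasureTheory.volume b₀ 1)
    (ε : ℝ) (hε : 0 < ε)
    (hlow : ∀ ξ ∈ Set.Ioo b₀ 1, ε * (1 - ξ)⁻¹ ≤ g ξ) : False := by
  have hmeas : AEStronglyMeasurable (fun ξ : ℝ => ε * (1-ξ)⁻¹)
      (volume.restrict (Set.uIoc b₀ 1)) :=
    (((measurable_const.sub measurable_id).inv).const_mul ε).aestronglyMeasurable
  have hIoc : Set.uIoc b₀ 1 = Set.Ioc b₀ 1 := Set.uIoc_of_le hb₀.2.le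
  have hbd : ∀ᵐ ξ ∂(volume.restrict (Set.uIoc b₀ 1)), ‖ε * (1-ξ)⁻¹‖ ≤ ‖g ξ‖ := by
    rw [hIoc]
    filter_upwards [MeasureTheory.ae_restrict_mem measurableSet_Ioc] with ξ hξ
    rcases eq_or_lt_of_le hξ.2 with h1 | h1
    · simp [← h1]
    · have h2 := hlow ξ ⟨hξ.1, h1⟩
      have h3 : (0:ℝ) < (1-ξ)⁻¹ := inv_pos.2 (by linarith)
      have h4 : 0 ≤ ε * (1-ξ)⁻¹ := by positivity
      rw [Real.norm_eq_abs, Real.norm_eq_abs, abs_of_nonneg h4]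
      exact h2.trans (le_abs_self _)
  have h2 : IntervalIntegrable (fun ξ : ℝ => ε * (1-ξ)⁻¹) volume b₀ 1 :=
    hg.mono_fun hmeas hbd
  have h3 : IntervalIntegrable (fun ξ : ℝ => (ξ - 1)⁻¹) volume b₀ 1 := by
    have h4 := (h2.const_mul ε⁻¹).neg
    have h5 : (-fun ξ : ℝ => ε⁻¹ * (ε * (1-ξ)⁻¹)) = fun ξ : ℝ => (ξ-1)⁻¹ := by
      funext ξ
      simp only [Pi.neg_apply]
      rw [← mul_assoc, inv_mul_cancel₀ hε.ne', one_mul, ← inv_neg, neg_sub]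
    rwa [h5] at h4
  rw [intervalIntegrable_sub_inv_iff] at h3
  rcases h3 with h | h
  · exact absurd h (by linarith [hb₀.2])
  · exact h Set.right_mem_uIcc

lemma aux_left (g : ℝ → ℝ) (c₀ : ℝ) (hc₀ : c₀ ∈ Set.Ioc (-1:ℝ) 0)
    (hg : IntervalIntegrable g MeasureTheory.volume (-1) c₀)
    (ε : ℝ) (hε : 0 < ε)
    (hlow : ∀ ξ ∈ Set.Ioo (-1:ℝ) c₀, ε * (1 + ξ)⁻¹ ≤ g ξ) : False := by
  set c₁ : ℝ := (c₀ - 1)/2 with hc₁def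
  have hc₁ : -1 < c₁ ∧ c₁ < c₀ := by constructor <;> (rw [hc₁def]; linarith [hc₀.1])
  have hg1 : IntervalIntegrable g MeasureTheory.volume (-1) c₁ := by
    refine hg.mono_set (Set.uIcc_subset_uIcc Set.left_mem_uIcc ?_)
    rw [Set.uIcc_of_le (by linarith [hc₀.1] : (-1:ℝ) ≤ c₀)]
    exact ⟨by linarith [hc₁.1], by linarith [hc₁.2]⟩
  have hmeas : AEStronglyMeasurable (fun ξ : ℝ => ε * (1+ξ)⁻¹)
      (volume.restrict (Set.uIoc (-1:ℝ) c₁)) :=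
    (((measurable_const.add measurable_id).inv).const_mul ε).aestronglyMeasurable
  have hIoc : Set.uIoc (-1:ℝ) c₁ = Set.Ioc (-1:ℝ) c₁ := Set.uIoc_of_le hc₁.1.le
  have hbd : ∀ᵐ ξ ∂(volume.restrict (Set.uIoc (-1:ℝ) c₁)), ‖ε * (1+ξ)⁻¹‖ ≤ ‖g ξ‖ := by
    rw [hIoc]
    filter_upwards [MeasureTheory.ae_restrict_mem measurableSet_Ioc] with ξ hξ
    have h2 := hlow ξ ⟨hξ.1, lt_of_le_of_lt hξ.2 hc₁.2⟩
    have h3 : (0:ℝ) < (1+ξ)⁻¹ := inv_pos.2 (by linarith [hξ.1])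
    have h4 : 0 ≤ ε * (1+ξ)⁻¹ := by positivity
    rw [Real.norm_eq_abs, Real.norm_eq_abs, abs_of_nonneg h4]
    exact h2.trans (le_abs_self _)
  have h2 : IntervalIntegrable (fun ξ : ℝ => ε * (1+ξ)⁻¹) MeasureTheory.volume (-1) c₁ :=
    hg1.mono_fun hmeas hbd
  have h3 : IntervalIntegrable (fun ξ : ℝ => (ξ - (-1))⁻¹) MeasureTheory.volume (-1) c₁ := by
    have h4 := h2.const_mul ε⁻¹
    have h5 : (fun ξ : ℝ => ε⁻¹ * (ε * (1+ξ)⁻¹)) = fun ξ : ℝ => (ξ - (-1))⁻¹ := by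
      funext ξ
      rw [← mul_assoc, inv_mul_cancel₀ hε.ne', one_mul, sub_neg_eq_add, add_comm]
    rwa [h5] at h4
  rw [intervalIntegrable_sub_inv_iff] at h3
  rcases h3 with h | h
  · exact absurd h (by linarith [hc₁.1])
  · exact h Set.left_mem_uIcc

end

set_option maxHeartbeats 1000000 in

/-- Quadratic-form lower bound for the dipole angular operator in dimension `n ≥ 3`. -/
theorem dipole_form_lower_bound (n : ℕ) (hn : 3 ≤ n) (γ : ℝ) (hγ : 0 ≤ γ)
    (ψ ψ' : ℝ → ℝ)
    (hderiv : ∀ ξ ∈ Set.Ioo (-1 : ℝ) 1, HasDerivAt ψ (ψ' ξ) ξ)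
    (hcont : ContinuousOn ψ (Set.Ioo (-1 : ℝ) 1))
    (hcont' : ContinuousOn ψ' (Set.Ioo (-1 : ℝ) 1))
    (hint1 : IntervalIntegrable
      (fun ξ => (1 - ξ ^ 2) ^ (((n : ℝ) - 1) / 2) * (ψ' ξ) ^ 2) MeasureTheory.volume (-1) 1)
    (hint2 : IntervalIntegrable
      (fun ξ => (1 - ξ ^ 2) ^ (((n : ℝ) - 3) / 2) * ξ * (ψ ξ) ^ 2) MeasureTheory.volume (-1) 1)
    (hint3 : IntervalIntegrable
      (fun ξ => (1 - ξ ^ 2) ^ (((n : ℝ) - 3) / 2) * (ψ ξ) ^ 2) MeasureTheory.volume (-1) 1)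
    (hnorm : ∫ ξ in (-1 : ℝ)..1, (1 - ξ ^ 2) ^ (((n : ℝ) - 3) / 2) * (ψ ξ) ^ 2 = 1) :
    (∫ ξ in (-1 : ℝ)..1,
        ((1 - ξ ^ 2) ^ (((n : ℝ) - 1) / 2) * (ψ' ξ) ^ 2
          + γ * (1 - ξ ^ 2) ^ (((n : ℝ) - 3) / 2) * ξ * (ψ ξ) ^ 2))
      ≥ -γ ^ 2 / ((n : ℝ) - 1) ^ 2 := by
  have hn3 : (3:ℝ) ≤ (n:ℝ) := by exact_mod_cast hn
  have hpos : (0:ℝ) < (n:ℝ) - 1 := by linarith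
  have hne : ((n:ℝ) - 1) ≠ 0 := hpos.ne'
  set a : ℝ := γ / ((n:ℝ) - 1) with hadef
  have ha0 : 0 ≤ a := div_nonneg hγ hpos.le
  have haγ : a * ((n:ℝ) - 1) = γ := div_mul_cancel₀ _ hne
  -- basic positivity of the weight
  have hbase : ∀ ξ : ℝ, ξ ∈ Set.Ioo (-1:ℝ) 1 → (0:ℝ) < 1 - ξ ^ 2 := by
    intro ξ hξ; nlinarith [hξ.1, hξ.2]
  have hw13 : ∀ ξ ∈ Set.Ioo (-1:ℝ) 1,
      (1 - ξ ^ 2) ^ (((n:ℝ) - 1) / 2)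
        = (1 - ξ ^ 2) * (1 - ξ ^ 2) ^ (((n:ℝ) - 3) / 2) := by
    intro ξ hξ
    rw [show ((n:ℝ) - 1)/2 = 1 + ((n:ℝ) - 3)/2 by ring, Real.rpow_add (hbase ξ hξ),
      Real.rpow_one]
  have hw1le : ∀ ξ ∈ Set.Ioo (-1:ℝ) 1,
      (1 - ξ ^ 2) ^ (((n:ℝ) - 1) / 2) ≤ (1 - ξ ^ 2) ^ (((n:ℝ) - 3) / 2) := by
    intro ξ hξ
    exact Real.rpow_le_rpow_of_exponent_ge (hbase ξ hξ) (by nlinarith [sq_nonneg ξ])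
      (by linarith)
  have hw1cont : Continuous (fun ξ : ℝ => (1 - ξ ^ 2) ^ (((n:ℝ) - 1) / 2)) :=
    (continuous_const.sub (continuous_pow 2)).rpow_const (fun x => Or.inr (by linarith))
  have hw3cont : Continuous (fun ξ : ℝ => (1 - ξ ^ 2) ^ (((n:ℝ) - 3) / 2)) :=
    (continuous_const.sub (continuous_pow 2)).rpow_const (fun x => Or.inr (by linarith))
  -- the boundary function F and its derivative Fd
  set F : ℝ → ℝ := fun ξ => (1 - ξ ^ 2) ^ (((n:ℝ) - 1) / 2) * ψ ξ ^ 2 with hFdef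
  set Fd : ℝ → ℝ := fun ξ => 2 * (1 - ξ ^ 2) ^ (((n:ℝ) - 1) / 2) * ψ ξ * ψ' ξ
      - ((n:ℝ) - 1) * ξ * (1 - ξ ^ 2) ^ (((n:ℝ) - 3) / 2) * ψ ξ ^ 2 with hFddef
  have hFnonneg : ∀ ξ ∈ Set.Ioo (-1:ℝ) 1, 0 ≤ F ξ := by
    intro ξ hξ
    have := hbase ξ hξ
    simp only [hFdef]
    positivity
  have hFderiv : ∀ ξ ∈ Set.Ioo (-1:ℝ) 1, HasDerivAt F (Fd ξ) ξ := by
    intro ξ hξ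
    have hb := hbase ξ hξ
    have h1 : HasDerivAt (fun ξ : ℝ => 1 - ξ ^ 2) (-(2 * ξ)) ξ := by
      simpa using (hasDerivAt_pow 2 ξ).const_sub 1
    have h2 : HasDerivAt (fun u : ℝ => u ^ (((n:ℝ) - 1) / 2))
        ((((n:ℝ) - 1) / 2) * (1 - ξ ^ 2) ^ (((n:ℝ) - 1) / 2 - 1)) (1 - ξ ^ 2) :=
      Real.hasDerivAt_rpow_const (Or.inl hb.ne')
    have h3 := h2.comp ξ h1
    have h4 : HasDerivAt (fun ξ => ψ ξ ^ 2) (2 * ψ ξ * ψ' ξ) ξ := by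
      have := (hderiv ξ hξ).fun_pow 2
      norm_num at this
      simpa [mul_comm, mul_assoc] using this
    have h5 : HasDerivAt F _ ξ :=
      h3.fun_mul h4
    convert h5 using 1
    rw [hFddef]
    simp only [Function.comp_apply]
    rw [show ((n:ℝ) - 1)/2 - 1 = ((n:ℝ) - 3)/2 by ring]
    ring
  -- the pointwise completed-square identity
  have hkey : ∀ ξ ∈ Set.Ioo (-1:ℝ) 1,
      (1 - ξ ^ 2) ^ (((n:ℝ) - 1) / 2) * ψ' ξ ^ 2
          + γ * (1 - ξ ^ 2) ^ (((n:ℝ) - 3) / 2) * ξ * ψ ξ ^ 2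
        = (1 - ξ ^ 2) ^ (((n:ℝ) - 1) / 2) * (ψ' ξ + a * ψ ξ) ^ 2
          - a ^ 2 * ((1 - ξ ^ 2) ^ (((n:ℝ) - 1) / 2) * ψ ξ ^ 2) - a * Fd ξ := by
    intro ξ hξ
    simp only [hFddef]
    rw [← haγ]
    ring
  -- integrability of the full integrand
  have hfint : IntervalIntegrable
      (fun ξ => (1 - ξ ^ 2) ^ (((n:ℝ) - 1) / 2) * ψ' ξ ^ 2
        + γ * (1 - ξ ^ 2) ^ (((n:ℝ) - 3) / 2) * ξ * ψ ξ ^ 2)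
      MeasureTheory.volume (-1) 1 := by
    have h := hint1.add (hint2.const_mul γ)
    simpa [mul_assoc] using h
  -- w3 ψ² integrability on subintervals, nonnegativity of its integral over pieces
  have hmono3 : ∀ c b : ℝ, c ∈ Set.Icc (-1:ℝ) 1 → b ∈ Set.Icc (-1:ℝ) 1 →
      IntervalIntegrable (fun ξ => (1 - ξ ^ 2) ^ (((n:ℝ) - 3) / 2) * ψ ξ ^ 2)
        MeasureTheory.volume c b := by
    intro c b hc hb
    refine hint3.mono_set (Set.uIcc_subset_uIcc ?_ ?_) <;>
      rw [Set.uIcc_of_le (by norm_num : (-1:ℝ) ≤ 1)]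
    exacts [hc, hb]
  have hnn3 : ∀ u v : ℝ, u ≤ v → -1 ≤ u → v ≤ 1 →
      0 ≤ ∫ ξ in u..v, (1 - ξ ^ 2) ^ (((n:ℝ) - 3) / 2) * ψ ξ ^ 2 := by
    intro u v huv hu hv
    refine intervalIntegral.integral_nonneg huv (fun x hx => ?_)
    have h1 : (0:ℝ) ≤ 1 - x ^ 2 := by nlinarith [hx.1, hx.2]
    positivity
  have hw3le1 : ∀ c b : ℝ, c ∈ Set.Icc (-1:ℝ) 1 → b ∈ Set.Icc (-1:ℝ) 1 → c ≤ b →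
      (∫ ξ in c..b, (1 - ξ ^ 2) ^ (((n:ℝ) - 3) / 2) * ψ ξ ^ 2) ≤ 1 := by
    intro c b hc hb hcb
    have e1 := intervalIntegral.integral_add_adjacent_intervals
      (hmono3 (-1) c ⟨le_refl _, by norm_num⟩ hc) (hmono3 c b hc hb)
    have e2 := intervalIntegral.integral_add_adjacent_intervals
      (hmono3 (-1) b ⟨le_refl _, by norm_num⟩ hb) (hmono3 b 1 hb ⟨by norm_num, le_refl _⟩)
    have t1 := hnn3 (-1) c hc.1 (le_refl _) hc.2
    have t2 := hnn3 b 1 hb.2 hb.1 (le_refl _)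
    linarith [hnorm, e1, e2, t1, t2]
  -- the subinterval estimate
  have hsub : ∀ c b : ℝ, c ∈ Set.Ioo (-1:ℝ) 1 → b ∈ Set.Ioo (-1:ℝ) 1 → c ≤ b →
      -a ^ 2 - a * (F b - F c) ≤ ∫ ξ in c..b,
        ((1 - ξ ^ 2) ^ (((n:ℝ) - 1) / 2) * ψ' ξ ^ 2
          + γ * (1 - ξ ^ 2) ^ (((n:ℝ) - 3) / 2) * ξ * ψ ξ ^ 2) := by
    intro c b hc hb hcb
    have huIcc : Set.uIcc c b = Set.Icc c b := Set.uIcc_of_le hcb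
    have hsubset : Set.uIcc c b ⊆ Set.Ioo (-1:ℝ) 1 := by
      rw [huIcc]
      exact fun x hx => ⟨lt_of_lt_of_le hc.1 hx.1, lt_of_le_of_lt hx.2 hb.2⟩
    have hψc : ContinuousOn ψ (Set.uIcc c b) := hcont.mono hsubset
    have hψ'c : ContinuousOn ψ' (Set.uIcc c b) := hcont'.mono hsubset
    -- the three pieces
    have hi1 : IntervalIntegrable
        (fun ξ => (1 - ξ ^ 2) ^ (((n:ℝ) - 1) / 2) * (ψ' ξ + a * ψ ξ) ^ 2)
        MeasureTheory.volume c b :=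
      (hw1cont.continuousOn.mul ((hψ'c.add (continuousOn_const.mul hψc)).pow 2)).intervalIntegrable
    have hi2' : IntervalIntegrable
        (fun ξ => (1 - ξ ^ 2) ^ (((n:ℝ) - 1) / 2) * ψ ξ ^ 2)
        MeasureTheory.volume c b :=
      (hw1cont.continuousOn.mul (hψc.pow 2)).intervalIntegrable
    have hi2 : IntervalIntegrable
        (fun ξ => a ^ 2 * ((1 - ξ ^ 2) ^ (((n:ℝ) - 1) / 2) * ψ ξ ^ 2))
        MeasureTheory.volume c b := hi2'.const_mul _
    have hFdcont : ContinuousOn Fd (Set.uIcc c b) := by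
      rw [hFddef]
      exact (((continuousOn_const.mul hw1cont.continuousOn).mul hψc).mul hψ'c).sub
        ((((continuousOn_const.mul continuousOn_id).mul hw3cont.continuousOn)).mul (hψc.pow 2))
    have hi3' : IntervalIntegrable Fd MeasureTheory.volume c b := hFdcont.intervalIntegrable
    have hi3 : IntervalIntegrable (fun ξ => a * Fd ξ) MeasureTheory.volume c b :=
      hi3'.const_mul _
    -- FTC
    have hFTC : ∫ ξ in c..b, Fd ξ = F b - F c :=
      intervalIntegral.integral_eq_sub_of_hasDerivAt
        (fun x hx => hFderiv x (hsubset hx)) hi3'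
    -- rewrite the integrand by the completed square identity
    have hcongr : (∫ ξ in c..b,
        ((1 - ξ ^ 2) ^ (((n:ℝ) - 1) / 2) * ψ' ξ ^ 2
          + γ * (1 - ξ ^ 2) ^ (((n:ℝ) - 3) / 2) * ξ * ψ ξ ^ 2))
        = ∫ ξ in c..b,
          ((1 - ξ ^ 2) ^ (((n:ℝ) - 1) / 2) * (ψ' ξ + a * ψ ξ) ^ 2
            - a ^ 2 * ((1 - ξ ^ 2) ^ (((n:ℝ) - 1) / 2) * ψ ξ ^ 2) - a * Fd ξ) :=
      intervalIntegral.integral_congr (fun ξ hξ => hkey ξ (hsubset hξ))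
    rw [hcongr, intervalIntegral.integral_sub (hi1.sub hi2) hi3,
      intervalIntegral.integral_sub hi1 hi2, intervalIntegral.integral_const_mul,
      intervalIntegral.integral_const_mul, hFTC]
    have hpos1 : 0 ≤ ∫ ξ in c..b, (1 - ξ ^ 2) ^ (((n:ℝ) - 1) / 2) * (ψ' ξ + a * ψ ξ) ^ 2 := by
      refine intervalIntegral.integral_nonneg hcb (fun x hx => ?_)
      have h1 : (0:ℝ) < 1 - x ^ 2 := hbase x (hsubset (by rwa [huIcc]))
      positivity
    have hle2 : (∫ ξ in c..b, (1 - ξ ^ 2) ^ (((n:ℝ) - 1) / 2) * ψ ξ ^ 2) ≤ 1 := by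
      have hstep : (∫ ξ in c..b, (1 - ξ ^ 2) ^ (((n:ℝ) - 1) / 2) * ψ ξ ^ 2)
          ≤ ∫ ξ in c..b, (1 - ξ ^ 2) ^ (((n:ℝ) - 3) / 2) * ψ ξ ^ 2 := by
        refine intervalIntegral.integral_mono_on hcb hi2'
          (hmono3 c b ⟨hc.1.le, hc.2.le⟩ ⟨hb.1.le, hb.2.le⟩) (fun x hx => ?_)
        have hxm : x ∈ Set.Ioo (-1:ℝ) 1 := hsubset (by rwa [huIcc])
        exact mul_le_mul_of_nonneg_right (hw1le x hxm) (sq_nonneg _)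
      have := hw3le1 c b ⟨hc.1.le, hc.2.le⟩ ⟨hb.1.le, hb.2.le⟩ hcb
      linarith
    have hmul : a ^ 2 * (∫ ξ in c..b, (1 - ξ ^ 2) ^ (((n:ℝ) - 1) / 2) * ψ ξ ^ 2) ≤ a ^ 2 * 1 :=
      mul_le_mul_of_nonneg_left hle2 (sq_nonneg a)
    linarith
  -- conclusion
  rw [ge_iff_le, show -γ ^ 2 / ((n:ℝ) - 1) ^ 2 = -a ^ 2 from by rw [hadef]; field_simp]
  refine le_of_forall_pos_le_add (fun ε hε => ?_)
  set δ : ℝ := ε / (a + 3) with hδdef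
  have hδ : 0 < δ := by rw [hδdef]; positivity
  -- integrability of f on subintervals
  have hfmono : ∀ c b : ℝ, c ∈ Set.Icc (-1:ℝ) 1 → b ∈ Set.Icc (-1:ℝ) 1 →
      IntervalIntegrable
        (fun ξ => (1 - ξ ^ 2) ^ (((n:ℝ) - 1) / 2) * ψ' ξ ^ 2
          + γ * (1 - ξ ^ 2) ^ (((n:ℝ) - 3) / 2) * ξ * ψ ξ ^ 2)
        MeasureTheory.volume c b := by
    intro c b hc hb
    refine hfint.mono_set (Set.uIcc_subset_uIcc ?_ ?_) <;>
      rw [Set.uIcc_of_le (by norm_num : (-1:ℝ) ≤ 1)]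
    exacts [hc, hb]
  have hfInt : MeasureTheory.IntegrableOn
      (fun ξ => (1 - ξ ^ 2) ^ (((n:ℝ) - 1) / 2) * ψ' ξ ^ 2
        + γ * (1 - ξ ^ 2) ^ (((n:ℝ) - 3) / 2) * ξ * ψ ξ ^ 2)
      (Set.uIcc (-1:ℝ) 1) MeasureTheory.volume := by
    rw [Set.uIcc_of_le (by norm_num : (-1:ℝ) ≤ 1)]
    exact (intervalIntegrable_iff_integrableOn_Icc_of_le (by norm_num)).1 hfint
  -- right tail control
  have hPcont := intervalIntegral.continuousOn_primitive_interval_left hfInt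
  have hPtail := hPcont 1 (by rw [Set.uIcc_of_le (by norm_num : (-1:ℝ) ≤ 1)]; constructor <;> norm_num)
  rw [ContinuousWithinAt, Metric.tendsto_nhdsWithin_nhds] at hPtail
  obtain ⟨η₁, hη₁, hball₁⟩ := hPtail δ hδ
  -- left tail control
  have hQcont := intervalIntegral.continuousOn_primitive_interval
    (a := (-1:ℝ)) (b := (1:ℝ)) hfInt
  have hQtail := hQcont (-1) (by rw [Set.uIcc_of_le (by norm_num : (-1:ℝ) ≤ 1)]; constructor <;> norm_num)
  rw [ContinuousWithinAt, Metric.tendsto_nhdsWithin_nhds] at hQtail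
  obtain ⟨η₂, hη₂, hball₂⟩ := hQtail δ hδ
  -- choose cut levels
  set b₀ : ℝ := max (1 - η₁/2) (1/2) with hb₀def
  have hb₀1 : b₀ < 1 := by rw [hb₀def]; apply max_lt <;> [linarith; norm_num]
  have hb₀half : (1/2 : ℝ) ≤ b₀ := le_max_right _ _
  have hb₀η : 1 - b₀ ≤ η₁/2 := by
    have := le_max_left (1 - η₁/2) (1/2); rw [← hb₀def] at this; linarith
  set c₀ : ℝ := min (-1 + η₂/2) (-1/2) with hc₀def
  have hc₀m1 : -1 < c₀ := by rw [hc₀def]; apply lt_min <;> [linarith; norm_num]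
  have hc₀half : c₀ ≤ (-1/2 : ℝ) := min_le_right _ _
  have hc₀η : c₀ + 1 ≤ η₂/2 := by
    have := min_le_left (-1 + η₂/2) (-1/2); rw [← hc₀def] at this; linarith
  -- find good right cut point
  have hbex : ∃ b ∈ Set.Ioo b₀ 1, F b < δ := by
    by_contra hcon
    push_neg at hcon
    refine aux_right (fun ξ => (1 - ξ ^ 2) ^ (((n:ℝ) - 3) / 2) * ψ ξ ^ 2) b₀
      ⟨by linarith, hb₀1⟩
      (hmono3 b₀ 1 ⟨by linarith, hb₀1.le⟩ ⟨by norm_num, le_refl _⟩)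
      (δ/2) (by positivity) ?_
    intro ξ hξ
    have hmem : ξ ∈ Set.Ioo (-1:ℝ) 1 := ⟨by linarith [hξ.1], hξ.2⟩
    have h1 : (0:ℝ) < 1 - ξ := by linarith [hξ.2]
    have h2 : (0:ℝ) < 1 + ξ := by linarith [hξ.1]
    have hFle := hcon ξ hξ
    have hb := hbase ξ hmem
    have hrel : (1 - ξ ^ 2) ^ (((n:ℝ) - 3) / 2) * ψ ξ ^ 2 = F ξ * (1 - ξ ^ 2)⁻¹ := by
      rw [hFdef]
      simp only
      rw [hw13 ξ hmem]
      field_simp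
    have hinv : (0:ℝ) < (1 - ξ ^ 2)⁻¹ := inv_pos.2 hb
    have step1 : δ * (1 - ξ ^ 2)⁻¹ ≤ F ξ * (1 - ξ ^ 2)⁻¹ :=
      mul_le_mul_of_nonneg_right hFle hinv.le
    have step2 : δ/2 * (1 - ξ)⁻¹ ≤ δ * (1 - ξ ^ 2)⁻¹ := by
      rw [show (1:ℝ) - ξ ^ 2 = (1 - ξ) * (1 + ξ) by ring, mul_inv]
      have h5 : (2:ℝ)⁻¹ ≤ (1 + ξ)⁻¹ := inv_anti₀ h2 (by linarith [hξ.2])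
      calc δ/2 * (1 - ξ)⁻¹ = δ * (1 - ξ)⁻¹ * 2⁻¹ := by ring
        _ ≤ δ * (1 - ξ)⁻¹ * (1 + ξ)⁻¹ := by
            refine mul_le_mul_of_nonneg_left h5 ?_
            positivity
        _ = δ * ((1 - ξ)⁻¹ * (1 + ξ)⁻¹) := by ring
    show δ/2 * (1 - ξ)⁻¹ ≤ (1 - ξ ^ 2) ^ (((n:ℝ) - 3) / 2) * ψ ξ ^ 2
    rw [hrel]
    linarith
  -- find good left cut point
  have hcex : ∃ c ∈ Set.Ioo (-1:ℝ) c₀, F c < δ := by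
    by_contra hcon
    push_neg at hcon
    refine aux_left (fun ξ => (1 - ξ ^ 2) ^ (((n:ℝ) - 3) / 2) * ψ ξ ^ 2) c₀
      ⟨hc₀m1, by linarith⟩
      (hmono3 (-1) c₀ ⟨le_refl _, by norm_num⟩ ⟨hc₀m1.le, by linarith⟩)
      (δ/2) (by positivity) ?_
    intro ξ hξ
    have hmem : ξ ∈ Set.Ioo (-1:ℝ) 1 := ⟨hξ.1, by linarith [hξ.2]⟩
    have h1 : (0:ℝ) < 1 - ξ := by nlinarith [hξ.2]
    have h2 : (0:ℝ) < 1 + ξ := by linarith [hξ.1]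
    have hFle := hcon ξ hξ
    have hb := hbase ξ hmem
    have hrel : (1 - ξ ^ 2) ^ (((n:ℝ) - 3) / 2) * ψ ξ ^ 2 = F ξ * (1 - ξ ^ 2)⁻¹ := by
      rw [hFdef]
      simp only
      rw [hw13 ξ hmem]
      field_simp
    have hinv : (0:ℝ) < (1 - ξ ^ 2)⁻¹ := inv_pos.2 hb
    have step1 : δ * (1 - ξ ^ 2)⁻¹ ≤ F ξ * (1 - ξ ^ 2)⁻¹ :=
      mul_le_mul_of_nonneg_right hFle hinv.le
    have step2 : δ/2 * (1 + ξ)⁻¹ ≤ δ * (1 - ξ ^ 2)⁻¹ := by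
      rw [show (1:ℝ) - ξ ^ 2 = (1 - ξ) * (1 + ξ) by ring, mul_inv]
      have h5 : (2:ℝ)⁻¹ ≤ (1 - ξ)⁻¹ := inv_anti₀ h1 (by linarith [hξ.1])
      calc δ/2 * (1 + ξ)⁻¹ = δ * (1 + ξ)⁻¹ * 2⁻¹ := by ring
        _ ≤ δ * (1 + ξ)⁻¹ * (1 - ξ)⁻¹ := by
            refine mul_le_mul_of_nonneg_left h5 ?_
            positivity
        _ = δ * ((1 - ξ)⁻¹ * (1 + ξ)⁻¹) := by ring
    show δ/2 * (1 + ξ)⁻¹ ≤ (1 - ξ ^ 2) ^ (((n:ℝ) - 3) / 2) * ψ ξ ^ 2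
    rw [hrel]
    linarith
  obtain ⟨b, hbmem, hFb⟩ := hbex
  obtain ⟨c, hcmem, hFc⟩ := hcex
  have hbIoo : b ∈ Set.Ioo (-1:ℝ) 1 := ⟨by linarith [hbmem.1], hbmem.2⟩
  have hcIoo : c ∈ Set.Ioo (-1:ℝ) 1 := ⟨hcmem.1, by linarith [hcmem.2]⟩
  have hcb : c ≤ b := by linarith [hcmem.2, hbmem.1]
  -- split the full integral
  have e1 := intervalIntegral.integral_add_adjacent_intervals
    (hfmono (-1) c ⟨le_refl _, by norm_num⟩ ⟨hcIoo.1.le, hcIoo.2.le⟩)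
    (hfmono c b ⟨hcIoo.1.le, hcIoo.2.le⟩ ⟨hbIoo.1.le, hbIoo.2.le⟩)
  have e2 := intervalIntegral.integral_add_adjacent_intervals
    (hfmono (-1) b ⟨le_refl _, by norm_num⟩ ⟨hbIoo.1.le, hbIoo.2.le⟩)
    (hfmono b 1 ⟨hbIoo.1.le, hbIoo.2.le⟩ ⟨by norm_num, le_refl _⟩)
  -- tail bounds
  have hPb := hball₁ (x := b)
    (by rw [Set.uIcc_of_le (by norm_num : (-1:ℝ) ≤ 1)]; exact ⟨hbIoo.1.le, hbIoo.2.le⟩)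
    (by rw [Real.dist_eq, abs_of_nonpos (by linarith [hbIoo.2])]; linarith [hbmem.1])
  have hQc := hball₂ (x := c)
    (by rw [Set.uIcc_of_le (by norm_num : (-1:ℝ) ≤ 1)]; exact ⟨hcIoo.1.le, hcIoo.2.le⟩)
    (by rw [Real.dist_eq, abs_of_nonneg (by linarith [hcIoo.1])]; linarith [hcmem.2])
  simp only [intervalIntegral.integral_same, Real.dist_eq, sub_zero] at hPb hQc
  have hPb' := (abs_lt.1 hPb).1
  have hQc' := (abs_lt.1 hQc).1
  -- subinterval estimate
  have hmain := hsub c b hcIoo hbIoo hcb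
  have hFbc : a * (F b - F c) ≤ a * δ := by
    refine mul_le_mul_of_nonneg_left ?_ ha0
    linarith [hFnonneg c hcIoo]
  have hδε : δ * (a + 3) = ε := by
    rw [hδdef]; field_simp
  nlinarith [hδ, ha0]
end

section
/- Let J be a countable index set, H a complex Hilbert space, T ≥ cI self-adjoint, W self-adjoint with dom(|T|^{1/2}) ⊆ dom(|W|^{1/2}), and Φ_j ∈ B(H) leaving dom(|T|^{1/2}) invariant. Assume (i) Σ_j Φ_j*Φ_j ≤ I, (ii) Σ_j |q_W(Φ_j f, Φ_j f)| ≥ D^{−1}|q_W(f,f)| for all f ∈ dom(|T|^{1/2}), and (iii) Σ_j ‖|T|^{1/2}Φ_j f‖² ≤ d‖|T|^{1/2} f‖² + e‖f‖² for all f ∈ dom(|T|^{1/2}), where d, D > 0 and e ≥ 0. If |q_W(Φ_j f, Φ_j f)| ≤ a·q_T(Φ_j f, Φ_j f) + b‖Φ_j f‖² for all f and all j, then |q_W(f,f)| ≤ a·d·D·q_T(f,f) + (a·e + b)·D·‖f‖² for all f ∈ dom(|T|^{1/2}). -/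
/-- Abstract IMS-type localization lemma (variant of Morgan's theorem): local relative form
bounds `|q_W(Φ_j f, Φ_j f)| ≤ a q_T(Φ_j f, Φ_j f) + b‖Φ_j f‖²` imply the global bound
`|q_W(f,f)| ≤ a d D q_T(f,f) + (a e + b) D ‖f‖²` on the form domain `dom`.
Here `qW f` stands for `q_W(f,f)` and `qT f` for the (nonnegative) quadratic form of `T`,
so that `qT f = ‖|T|^{1/2} f‖²`. -/
theorem ims_localization
    {H : Type*} [NormedAddCommGroup H] [InnerProductSpace ℂ H]
    {J : Type*} [Countable J]
    (dom : Set H) (qW qT : H → ℝ) (Φ : J → H →L[ℂ] H)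
    (a b e : ℝ) (d D : ℝ) (ha : 0 ≤ a) (hb : 0 ≤ b) (he : 0 ≤ e) (hd : 0 < d) (hD : 0 < D)
    (hqT : ∀ f ∈ dom, 0 ≤ qT f)
    (hinv : ∀ j, ∀ f ∈ dom, Φ j f ∈ dom)
    -- (i)  Σ_j Φ_j*Φ_j ≤ I  (in the quadratic-form sense)
    (hi : ∀ f : H, Summable (fun j => ‖Φ j f‖ ^ 2) ∧ ∑' j, ‖Φ j f‖ ^ 2 ≤ ‖f‖ ^ 2)
    -- (ii)  Σ_j |q_W(Φ_j f, Φ_j f)| ≥ D⁻¹ |q_W(f,f)|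
    (hii : ∀ f ∈ dom, Summable (fun j => |qW (Φ j f)|) ∧
      D⁻¹ * |qW f| ≤ ∑' j, |qW (Φ j f)|)
    -- (iii)  Σ_j ‖|T|^{1/2} Φ_j f‖² ≤ d ‖|T|^{1/2} f‖² + e ‖f‖²
    (hiii : ∀ f ∈ dom, Summable (fun j => qT (Φ j f)) ∧
      ∑' j, qT (Φ j f) ≤ d * qT f + e * ‖f‖ ^ 2)
    -- local relative form bounds
    (hloc : ∀ f ∈ dom, ∀ j, |qW (Φ j f)| ≤ a * qT (Φ j f) + b * ‖Φ j f‖ ^ 2) :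
    ∀ f ∈ dom, |qW f| ≤ a * d * D * qT f + (a * e + b) * D * ‖f‖ ^ 2 := by
  intro f hf
  obtain ⟨hs2, hle2⟩ := hii f hf
  obtain ⟨hs3, hle3⟩ := hiii f hf
  obtain ⟨hs1, hle1⟩ := hi f
  have hsum : Summable (fun j => a * qT (Φ j f) + b * ‖Φ j f‖ ^ 2) :=
    ((hs3.mul_left a).add (hs1.mul_left b))
  have h1 : ∑' j, |qW (Φ j f)| ≤ ∑' j, (a * qT (Φ j f) + b * ‖Φ j f‖ ^ 2) :=
    Summable.tsum_le_tsum (fun j => hloc f hf j) hs2 hsum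
  have h2 : ∑' j, (a * qT (Φ j f) + b * ‖Φ j f‖ ^ 2)
      = a * ∑' j, qT (Φ j f) + b * ∑' j, ‖Φ j f‖ ^ 2 := by
    rw [Summable.tsum_add (hs3.mul_left a) (hs1.mul_left b), tsum_mul_left, tsum_mul_left]
  have key : D⁻¹ * |qW f| ≤ a * (d * qT f + e * ‖f‖ ^ 2) + b * ‖f‖ ^ 2 := by
    calc D⁻¹ * |qW f| ≤ ∑' j, |qW (Φ j f)| := hle2
      _ ≤ a * ∑' j, qT (Φ j f) + b * ∑' j, ‖Φ j f‖ ^ 2 := by rw [← h2]; exact h1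
      _ ≤ a * (d * qT f + e * ‖f‖ ^ 2) + b * ‖f‖ ^ 2 := by
          gcongr
  rw [inv_mul_le_iff₀ hD] at key
  calc |qW f| ≤ D * (a * (d * qT f + e * ‖f‖ ^ 2) + b * ‖f‖ ^ 2) := key
    _ = a * d * D * qT f + (a * e + b) * D * ‖f‖ ^ 2 := by ring
end
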